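/- In the setting of the eigenvalue perturbation lemma (ε3 < 1/2), Â has unit-norm right eigenvectors ξ̂_1,...,ξ̂_k satisfying ‖ξ̂_{τ(i)} − ξ_i‖₂ ≤ 4(k−1)·‖R^{-1}‖₂·ε3 for all i (up to a choice of sign for each ξ̂_i), where ξ_i are the unit-norm eigenvectors of A. -/

import Mathlib

/-- Euclidean norm of a vector in `ℝ^n`. -/
noncomputable def vnorm {n : ℕ} (v : Fin n → ℝ) : ℝ := Real.sqrt (∑ i, v i ^ 2)

/-- The `j`-th largest singular value (1-indexed) of a real `m × n` matrix, via the
Courant–Fischer max-min characterization.  In particular `sval A 1` is the spectral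
norm `‖A‖₂` and `sval A k` is `σ_k(A)`. -/
noncomputable def sval {m n : ℕ} (A : Matrix (Fin m) (Fin n) ℝ) (j : ℕ) : ℝ :=
  sSup {c : ℝ | 0 ≤ c ∧ ∃ W : Submodule ℝ (Fin n → ℝ), Module.finrank ℝ W = j ∧
    ∀ v ∈ W, c * vnorm v ≤ vnorm (A.mulVec v)}

/-- `U` is an `m × k` matrix of orthonormal columns spanning a top-`k` left singular
subspace of `A`: its columns are orthonormal eigenvectors of `A Aᵀ` whose eigenvalues
are (at least) `σ_k(A)²`, i.e. belong to the `k` largest. -/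
def IsTopSingular {m n k : ℕ} (A : Matrix (Fin m) (Fin n) ℝ)
    (U : Matrix (Fin m) (Fin k) ℝ) : Prop :=
  U.transpose * U = 1 ∧ ∃ D : Fin k → ℝ,
    A * A.transpose * U = U * Matrix.diagonal D ∧ ∀ j, sval A k ^ 2 ≤ D j

namespace S13

def toE {k : ℕ} (v : Fin k → ℝ) : EuclideanSpace ℝ (Fin k) := WithLp.toLp 2 v

lemma vnorm_eq_norm {k : ℕ} (v : Fin k → ℝ) : vnorm v = ‖toE v‖ := by
  rw [EuclideanSpace.norm_eq, vnorm]
  congr 1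
  refine Finset.sum_congr rfl fun i _ => ?_
  rw [Real.norm_eq_abs, sq_abs]; rfl

lemma vnorm_nonneg {k : ℕ} (v : Fin k → ℝ) : 0 ≤ vnorm v := Real.sqrt_nonneg _

lemma vnorm_smul {k : ℕ} (a : ℝ) (v : Fin k → ℝ) : vnorm (a • v) = |a| * vnorm v := by
  rw [vnorm_eq_norm, vnorm_eq_norm, show toE (a • v) = a • toE v from rfl, norm_smul,
    Real.norm_eq_abs]

lemma vnorm_add_le {k : ℕ} (v w : Fin k → ℝ) : vnorm (v + w) ≤ vnorm v + vnorm w := by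
  rw [vnorm_eq_norm, vnorm_eq_norm, vnorm_eq_norm, show toE (v + w) = toE v + toE w from rfl]
  exact norm_add_le _ _

lemma vnorm_eq_zero {k : ℕ} {v : Fin k → ℝ} : vnorm v = 0 ↔ v = 0 := by
  rw [vnorm_eq_norm, norm_eq_zero]; exact WithLp.toLp_eq_zero 2

lemma vnorm_zero {k : ℕ} : vnorm (0 : Fin k → ℝ) = 0 := vnorm_eq_zero.2 rfl

lemma vnorm_pos {k : ℕ} {v : Fin k → ℝ} (hv : v ≠ 0) : 0 < vnorm v :=
  lt_of_le_of_ne (vnorm_nonneg v) fun h => hv (vnorm_eq_zero.1 h.symm)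

lemma abs_entry_le_vnorm {k : ℕ} (v : Fin k → ℝ) (i : Fin k) : |v i| ≤ vnorm v := by
  rw [vnorm, ← Real.sqrt_sq_eq_abs]
  exact Real.sqrt_le_sqrt (Finset.single_le_sum (fun j _ => sq_nonneg (v j)) (Finset.mem_univ i))

lemma vnorm_sum_le {k : ℕ} {ι : Type*} (s : Finset ι) (f : ι → (Fin k → ℝ)) :
    vnorm (∑ j ∈ s, f j) ≤ ∑ j ∈ s, vnorm (f j) := by
  have : toE (∑ j ∈ s, f j) = ∑ j ∈ s, toE (f j) := by simp [toE]
  rw [vnorm_eq_norm, this]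
  refine (norm_sum_le _ _).trans ?_
  exact le_of_eq (Finset.sum_congr rfl fun j _ => (vnorm_eq_norm (f j)).symm)

noncomputable def frob {m n : ℕ} (M : Matrix (Fin m) (Fin n) ℝ) : ℝ :=
  Real.sqrt (∑ i, ∑ j, M i j ^ 2)

lemma vnorm_mulVec_le_frob {m n : ℕ} (M : Matrix (Fin m) (Fin n) ℝ) (v : Fin n → ℝ) :
    vnorm (M.mulVec v) ≤ frob M * vnorm v := by
  rw [vnorm, frob, vnorm, ← Real.sqrt_mul (by positivity)]
  apply Real.sqrt_le_sqrt
  rw [Finset.sum_mul]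
  apply Finset.sum_le_sum
  intro i _
  exact (Finset.sum_mul_sq_le_sq_mul_sq Finset.univ (fun j => M i j) v)

/-- the defining set of `sval` -/
def svalSet {m n : ℕ} (M : Matrix (Fin m) (Fin n) ℝ) (j : ℕ) : Set ℝ :=
  {c : ℝ | 0 ≤ c ∧ ∃ W : Submodule ℝ (Fin n → ℝ), Module.finrank ℝ W = j ∧
    ∀ v ∈ W, c * vnorm v ≤ vnorm (M.mulVec v)}

lemma sval_eq {m n : ℕ} (M : Matrix (Fin m) (Fin n) ℝ) (j : ℕ) :
    sval M j = sSup (svalSet M j) := rfl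

lemma svalSet_bddAbove {m n : ℕ} (M : Matrix (Fin m) (Fin n) ℝ) {j : ℕ} (hj : 0 < j) :
    BddAbove (svalSet M j) := by
  refine ⟨frob M, fun c hc => ?_⟩
  obtain ⟨hc0, W, hW, hWp⟩ := hc
  have hWne : W ≠ ⊥ := by
    intro h
    rw [h, finrank_bot] at hW
    omega
  obtain ⟨w, hwW, hw0⟩ := Submodule.exists_mem_ne_zero_of_ne_bot hWne
  have h1 := hWp w hwW
  have h2 := vnorm_mulVec_le_frob M w
  have h3 : 0 < vnorm w := vnorm_pos hw0
  nlinarith [h1.trans h2]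

-- basis vector
lemma single_ne_zero' {n : ℕ} (hn : 0 < n) (i : Fin n) : (Pi.single i 1 : Fin n → ℝ) ≠ 0 := by
  intro h
  have := congrFun h i
  simp [Pi.single_eq_same] at this

lemma zero_mem_svalSet_one {m n : ℕ} (hn : 0 < n) (M : Matrix (Fin m) (Fin n) ℝ) :
    (0 : ℝ) ∈ svalSet M 1 := by
  refine ⟨le_refl _, Submodule.span ℝ {Pi.single ⟨0, hn⟩ 1}, finrank_span_singleton (single_ne_zero' hn _), ?_⟩
  intro v _
  rw [zero_mul]
  exact vnorm_nonneg _

lemma sval_one_nonneg {m n : ℕ} (hn : 0 < n) (M : Matrix (Fin m) (Fin n) ℝ) :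
    0 ≤ sval M 1 :=
  le_csSup (svalSet_bddAbove M one_pos) (zero_mem_svalSet_one hn M)

lemma vnorm_mulVec_le_sval_one {m n : ℕ} (hn : 0 < n) (M : Matrix (Fin m) (Fin n) ℝ)
    (v : Fin n → ℝ) : vnorm (M.mulVec v) ≤ sval M 1 * vnorm v := by
  rcases eq_or_ne v 0 with rfl | hv
  · simp [Matrix.mulVec_zero, vnorm_zero]
  have hvn : 0 < vnorm v := vnorm_pos hv
  have hmem : vnorm (M.mulVec v) / vnorm v ∈ svalSet M 1 := by
    refine ⟨div_nonneg (vnorm_nonneg _) (vnorm_nonneg _), Submodule.span ℝ {v},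
      finrank_span_singleton hv, ?_⟩
    intro w hw
    obtain ⟨a, rfl⟩ := Submodule.mem_span_singleton.1 hw
    rw [Matrix.mulVec_smul, vnorm_smul, vnorm_smul]
    apply le_of_eq
    field_simp
  have := le_csSup (svalSet_bddAbove M one_pos) hmem
  rw [div_le_iff₀ hvn] at this
  exact this

lemma top_mem_aux {n : ℕ} : Module.finrank ℝ (⊤ : Submodule ℝ (Fin n → ℝ)) = n := by
  rw [finrank_top, Module.finrank_fin_fun]

lemma zero_mem_svalSet_n {m n : ℕ} (M : Matrix (Fin m) (Fin n) ℝ) :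
    (0 : ℝ) ∈ svalSet M n :=
  ⟨le_refl _, ⊤, top_mem_aux, fun v _ => by rw [zero_mul]; exact vnorm_nonneg _⟩

lemma sval_n_mul_le {m n : ℕ} (M : Matrix (Fin m) (Fin n) ℝ) (v : Fin n → ℝ) :
    sval M n * vnorm v ≤ vnorm (M.mulVec v) := by
  rcases eq_or_ne v 0 with rfl | hv
  · simp [Matrix.mulVec_zero, vnorm_zero]
  have hvn : 0 < vnorm v := vnorm_pos hv
  have : sval M n ≤ vnorm (M.mulVec v) / vnorm v := by
    apply csSup_le ⟨0, zero_mem_svalSet_n M⟩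
    rintro c ⟨hc0, W, hW, hWp⟩
    have hWtop : W = ⊤ := Submodule.eq_top_of_finrank_eq (by rw [hW, Module.finrank_fin_fun])
    have := hWp v (hWtop ▸ Submodule.mem_top)
    rw [le_div_iff₀ hvn]
    exact this
  calc sval M n * vnorm v ≤ (vnorm (M.mulVec v) / vnorm v) * vnorm v := by
        exact mul_le_mul_of_nonneg_right this hvn.le
    _ = vnorm (M.mulVec v) := by field_simp

end S13

namespace S13B
open S13

variable {k : ℕ} (hk : 0 < k) {R : Matrix (Fin k) (Fin k) ℝ} (hR : IsUnit R)

lemma frob_pos {m n : ℕ} {M : Matrix (Fin m) (Fin n) ℝ} (hM : M ≠ 0) : 0 < frob M := by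
  obtain ⟨i, hi⟩ := Function.ne_iff.1 hM
  obtain ⟨j, hj⟩ := Function.ne_iff.1 hi
  rw [frob, Real.sqrt_pos]
  refine Finset.sum_pos' (fun a _ => by positivity) ⟨i, Finset.mem_univ i, ?_⟩
  refine Finset.sum_pos' (fun b _ => sq_nonneg _) ⟨j, Finset.mem_univ j, ?_⟩
  have : M i j ≠ 0 := hj
  positivity

lemma frob_inv_pos (hk : 0 < k) (hR : IsUnit R) : 0 < frob R⁻¹ := by
  have hdet : IsUnit R.det := (Matrix.isUnit_iff_isUnit_det R).1 hR
  apply frob_pos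
  intro hzero
  have hone : (R⁻¹ * R : Matrix (Fin k) (Fin k) ℝ) = 1 := Matrix.nonsing_inv_mul R hdet
  rw [hzero, Matrix.zero_mul] at hone
  have := congrFun (congrFun hone ⟨0, hk⟩) ⟨0, hk⟩
  simp [Matrix.one_apply_eq] at this

lemma sval_k_pos (hk : 0 < k) (hR : IsUnit R) : 0 < sval R k := by
  have hdet : IsUnit R.det := (Matrix.isUnit_iff_isUnit_det R).1 hR
  have hF := frob_inv_pos hk hR
  have hmem : (frob R⁻¹)⁻¹ ∈ svalSet R k := by
    refine ⟨by positivity, ⊤, top_mem_aux, fun v _ => ?_⟩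
    have h1 : (R⁻¹).mulVec (R.mulVec v) = v := by
      rw [Matrix.mulVec_mulVec, Matrix.nonsing_inv_mul R hdet, Matrix.one_mulVec]
    have h2 := vnorm_mulVec_le_frob R⁻¹ (R.mulVec v)
    rw [h1] at h2
    rw [inv_mul_le_iff₀ hF]
    linarith
  exact lt_of_lt_of_le (by positivity) (le_csSup (svalSet_bddAbove R hk) hmem)

lemma sval_k_le_sval_one (hk : 0 < k) (R : Matrix (Fin k) (Fin k) ℝ) : sval R k ≤ sval R 1 := by
  apply csSup_le ⟨0, zero_mem_svalSet_n R⟩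
  rintro c ⟨hc0, W, hW, hWp⟩
  have hWtop : W = ⊤ := Submodule.eq_top_of_finrank_eq (by rw [hW, Module.finrank_fin_fun])
  apply le_csSup (svalSet_bddAbove R one_pos)
  exact ⟨hc0, Submodule.span ℝ {Pi.single ⟨0, hk⟩ 1},
    finrank_span_singleton (single_ne_zero' hk _),
    fun v _ => hWp v (hWtop ▸ Submodule.mem_top)⟩

lemma sval_inv_one_mul_sval_k_le_one (hk : 0 < k) (hR : IsUnit R) :
    sval R⁻¹ 1 * sval R k ≤ 1 := by
  have hdet : IsUnit R.det := (Matrix.isUnit_iff_isUnit_det R).1 hR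
  have hσ := sval_k_pos hk hR
  have h : sval R⁻¹ 1 ≤ (sval R k)⁻¹ := by
    apply csSup_le ⟨0, zero_mem_svalSet_one hk R⁻¹⟩
    rintro c ⟨hc0, W, hW, hWp⟩
    have hWne : W ≠ ⊥ := fun h => by rw [h, finrank_bot] at hW; omega
    obtain ⟨w, hwW, hw0⟩ := Submodule.exists_mem_ne_zero_of_ne_bot hWne
    have h1 := hWp w hwW
    have h2 := sval_n_mul_le R ((R⁻¹).mulVec w)
    have h3 : R.mulVec ((R⁻¹).mulVec w) = w := by
      rw [Matrix.mulVec_mulVec, Matrix.mul_nonsing_inv R hdet, Matrix.one_mulVec]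
    rw [h3] at h2
    have hw : 0 < vnorm w := vnorm_pos hw0
    have hcσ : c * sval R k ≤ 1 := by nlinarith [mul_le_mul_of_nonneg_left h1 hσ.le]
    calc c = c * sval R k * (sval R k)⁻¹ := by field_simp
      _ ≤ 1 * (sval R k)⁻¹ := mul_le_mul_of_nonneg_right hcσ (by positivity)
      _ = (sval R k)⁻¹ := one_mul _
  calc sval R⁻¹ 1 * sval R k ≤ (sval R k)⁻¹ * sval R k := mul_le_mul_of_nonneg_right h hσ.le
    _ = 1 := inv_mul_cancel₀ hσ.ne'

end S13B


namespace S13C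
open S13 S13B

lemma vnorm_neg {k : ℕ} (v : Fin k → ℝ) : vnorm (-v) = vnorm v := by
  simp [vnorm]

lemma vnorm_sub_le {k : ℕ} (u v : Fin k → ℝ) : vnorm (u - v) ≤ vnorm u + vnorm v := by
  rw [sub_eq_add_neg]
  exact (vnorm_add_le u (-v)).trans (by rw [vnorm_neg])

lemma bf {k : ℕ} {A Ah R : Matrix (Fin k) (Fin k) ℝ} {lam : Fin k → ℝ} {d : ℝ}
    (hdet : IsUnit R.det)
    (hA : A = R * Matrix.diagonal lam * R⁻¹)
    (hd : 0 ≤ d)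
    (hchain : ∀ y : Fin k → ℝ,
      vnorm ((R⁻¹).mulVec ((Ah - A).mulVec (R.mulVec y))) ≤ d * vnorm y)
    {s t : ℝ} (hs0 : 0 ≤ s) (hs1 : s ≤ 1)
    (ht : ∀ i, d < |lam i - t|) :
    (A + s • (Ah - A) - t • (1 : Matrix (Fin k) (Fin k) ℝ)).det ≠ 0 := by
  intro hdet0
  obtain ⟨x, hx0, hxv⟩ := Matrix.exists_mulVec_eq_zero_iff.2 hdet0
  set D := Matrix.diagonal lam with hD
  set y := (R⁻¹).mulVec x with hy
  have hxy : x = R.mulVec y := by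
    rw [hy, Matrix.mulVec_mulVec, Matrix.mul_nonsing_inv R hdet, Matrix.one_mulVec]
  have hy0 : y ≠ 0 := fun h => hx0 (by rw [hxy, h, Matrix.mulVec_zero])
  -- rearrange the kernel equation
  have heq1 : R.mulVec (D.mulVec y - t • y) = -(s • (Ah - A).mulVec x) := by
    have e1 : A.mulVec x = R.mulVec (D.mulVec y) := by
      rw [hA, hy, Matrix.mulVec_mulVec, Matrix.mulVec_mulVec]
    have e2 : (s • (Ah - A)).mulVec x = s • (Ah - A).mulVec x :=
      Matrix.smul_mulVec s _ x
    have e3 : (t • (1 : Matrix (Fin k) (Fin k) ℝ)).mulVec x = t • x := by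
      rw [Matrix.smul_mulVec, Matrix.one_mulVec]
    rw [Matrix.sub_mulVec, Matrix.add_mulVec, e1, e2, e3] at hxv
    have e4 : R.mulVec (D.mulVec y - t • y) = R.mulVec (D.mulVec y) - t • x := by
      rw [Matrix.mulVec_sub, Matrix.mulVec_smul, ← hxy]
    rw [e4]
    apply eq_neg_of_add_eq_zero_left
    rw [← hxv]; abel
  have heq2 : D.mulVec y - t • y = -(s • (R⁻¹).mulVec ((Ah - A).mulVec x)) := by
    have := congrArg (fun w => (R⁻¹).mulVec w) heq1
    simpa only [Matrix.mulVec_mulVec, Matrix.nonsing_inv_mul R hdet, Matrix.one_mulVec,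
      Matrix.mulVec_neg, Matrix.mulVec_smul] using this
  -- upper bound
  have hub : vnorm (D.mulVec y - t • y) ≤ d * vnorm y := by
    rw [heq2, vnorm_neg, vnorm_smul, abs_of_nonneg hs0, hxy]
    calc s * vnorm ((R⁻¹).mulVec ((Ah - A).mulVec (R.mulVec y)))
        ≤ 1 * (d * vnorm y) := by
          apply mul_le_mul hs1 (hchain y) (vnorm_nonneg _)
          norm_num
      _ = d * vnorm y := one_mul _
  -- lower bound (strict)
  have hlb : d * vnorm y < vnorm (D.mulVec y - t • y) := by
    obtain ⟨i0, hi0⟩ := Function.ne_iff.1 hy0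
    have hcoord : ∀ i, (D.mulVec y - t • y) i = (lam i - t) * y i := by
      intro i
      simp only [Pi.sub_apply, Pi.smul_apply, smul_eq_mul, hD, Matrix.mulVec_diagonal]
      ring
    have hsq : ∑ i, (d * y i) ^ 2 < ∑ i, ((D.mulVec y - t • y) i) ^ 2 := by
      apply Finset.sum_lt_sum
      · intro i _
        rw [hcoord]
        have h1 : d ^ 2 ≤ (lam i - t) ^ 2 := by
          rw [← sq_abs (lam i - t)]
          exact pow_le_pow_left₀ hd (ht i).le 2
        nlinarith [sq_nonneg (y i)]
      · refine ⟨i0, Finset.mem_univ i0, ?_⟩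
        rw [hcoord]
        have h1 : d ^ 2 < (lam i0 - t) ^ 2 := by
          rw [← sq_abs (lam i0 - t)]
          exact pow_lt_pow_left₀ (ht i0) hd (by norm_num)
        have h2 : (0:ℝ) < (y i0) ^ 2 := by
          have : y i0 ≠ 0 := hi0
          positivity
        calc (d * y i0) ^ 2 = d ^ 2 * (y i0) ^ 2 := by ring
          _ < (lam i0 - t) ^ 2 * (y i0) ^ 2 := by nlinarith
          _ = ((lam i0 - t) * y i0) ^ 2 := by ring
    have e5 : d * vnorm y = Real.sqrt (∑ i, (d * y i) ^ 2) := by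
      have e6 : ∑ i, (d * y i) ^ 2 = d ^ 2 * ∑ i, y i ^ 2 := by
        rw [Finset.mul_sum]
        exact Finset.sum_congr rfl fun i _ => by ring
      rw [vnorm, e6, Real.sqrt_mul (sq_nonneg d), Real.sqrt_sq hd]
    rw [e5, vnorm]
    exact Real.sqrt_lt_sqrt (by positivity) hsq
  exact absurd hub (not_le.2 hlb)

end S13C

namespace S13D
open S13 S13B S13C

lemma sign_const {f : ℝ → ℝ} (hf : Continuous f)
    (h : ∀ s ∈ Set.Icc (0:ℝ) 1, f s ≠ 0) : 0 < f 0 * f 1 := by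
  by_contra h'
  push_neg at h'
  rcases mul_nonpos_iff.1 h' with ⟨h0, h1⟩ | ⟨h0, h1⟩
  · obtain ⟨s, hs, hfs⟩ := intermediate_value_Icc' (by norm_num : (0:ℝ) ≤ 1)
      hf.continuousOn (Set.mem_Icc.2 ⟨h1, h0⟩)
    exact h s hs hfs
  · obtain ⟨s, hs, hfs⟩ := intermediate_value_Icc (by norm_num : (0:ℝ) ≤ 1)
      hf.continuousOn (Set.mem_Icc.2 ⟨h0, h1⟩)
    exact h s hs hfs

lemma det_A_sub {k : ℕ} {A R : Matrix (Fin k) (Fin k) ℝ} {lam : Fin k → ℝ}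
    (hdet : IsUnit R.det) (hA : A = R * Matrix.diagonal lam * R⁻¹) (t : ℝ) :
    (A - t • (1 : Matrix (Fin k) (Fin k) ℝ)).det = ∏ j, (lam j - t) := by
  have h1 : A - t • (1 : Matrix (Fin k) (Fin k) ℝ)
      = R * (Matrix.diagonal lam - t • 1) * R⁻¹ := by
    rw [Matrix.mul_sub, Matrix.sub_mul, Matrix.mul_smul, Matrix.mul_one,
      Matrix.smul_mul, Matrix.mul_nonsing_inv R hdet, ← hA]
  have h2 : R.det * R⁻¹.det = 1 := by
    rw [← Matrix.det_mul, Matrix.mul_nonsing_inv R hdet, Matrix.det_one]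
  rw [h1, Matrix.det_mul, Matrix.det_mul]
  rw [Matrix.smul_one_eq_diagonal, Matrix.diagonal_sub, Matrix.det_diagonal]
  calc R.det * (∏ j, (lam j - t)) * R⁻¹.det
      = (R.det * R⁻¹.det) * ∏ j, (lam j - t) := by ring
    _ = ∏ j, (lam j - t) := by rw [h2, one_mul]

lemma cont_s {k : ℕ} (A Δ : Matrix (Fin k) (Fin k) ℝ) (t : ℝ) :
    Continuous fun s : ℝ => (A + s • Δ - t • (1 : Matrix (Fin k) (Fin k) ℝ)).det := by
  apply Continuous.matrix_det
  exact (continuous_const.add (continuous_id.smul continuous_const)).sub continuous_const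

lemma cont_t {k : ℕ} (B : Matrix (Fin k) (Fin k) ℝ) :
    Continuous fun t : ℝ => (B - t • (1 : Matrix (Fin k) (Fin k) ℝ)).det := by
  apply Continuous.matrix_det
  exact continuous_const.sub (continuous_id.smul continuous_const)

end S13D

open S13 S13B S13C S13D in
set_option maxHeartbeats 1000000 in
/-- (Eigenvector perturbation.) In the setting of the eigenvalue
perturbation lemma (`ε₃ < 1/2`), `Â` has unit-norm right eigenvectors
`ξ̂_1,…,ξ̂_k` (with distinct real eigenvalues `λ̂_i`, matched to the `λ_i` by the
permutation `τ`) satisfying, up to a choice of sign `s i ∈ {±1}` for each,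
`‖s i • ξ̂_{τ(i)} − ξ_i‖₂ ≤ 4(k−1)‖R⁻¹‖₂ ε₃` where `ξ_i` is the `i`-th column of `R`. -/
theorem stmt_13 {k : ℕ} (hk : 1 < k)
    (A Ah R : Matrix (Fin k) (Fin k) ℝ) (lam : Fin k → ℝ)
    (hRunit : IsUnit R)
    (hRcol : ∀ j, vnorm (fun i => R i j) = 1)
    (hA : A = R * Matrix.diagonal lam * R⁻¹)
    (hdist : Function.Injective lam)
    (γ ε3 : ℝ)
    (hγ : γ = sInf {r : ℝ | ∃ i j, i ≠ j ∧ r = |lam i - lam j|})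
    (hε3 : ε3 = (sval R 1 / sval R k) * sval (Ah - A) 1 / γ)
    (hε3lt : ε3 < 1 / 2) :
    ∃ (xih : Fin k → (Fin k → ℝ)) (lamh : Fin k → ℝ) (τ : Equiv.Perm (Fin k))
      (s : Fin k → ℝ),
      Function.Injective lamh ∧
      (∀ i, vnorm (xih i) = 1) ∧
      (∀ i, Ah.mulVec (xih i) = lamh i • xih i) ∧
      (∀ i, |lamh (τ i) - lam i| ≤ ε3 * γ) ∧
      (∀ i, s i = 1 ∨ s i = -1) ∧
      (∀ i, vnorm (fun a => s i * xih (τ i) a - R a i)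
        ≤ 4 * ((k : ℝ) - 1) * sval R⁻¹ 1 * ε3) := by
  have hk0 : 0 < k := by omega
  have hdetR : IsUnit R.det := (Matrix.isUnit_iff_isUnit_det R).1 hRunit
  set Δ := Ah - A with hΔdef
  set N := sval R⁻¹ 1 with hNdef
  set σ1 := sval R 1 with hσ1def
  set σk := sval R k with hσkdef
  set σΔ := sval Δ 1 with hσΔdef
  have hσk : 0 < σk := sval_k_pos hk0 hRunit
  have hσk1 : σk ≤ σ1 := sval_k_le_sval_one hk0 R
  have hσΔ0 : 0 ≤ σΔ := sval_one_nonneg hk0 Δ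
  have hσ10 : 0 ≤ σ1 := sval_one_nonneg hk0 R
  have hN0 : 0 ≤ N := sval_one_nonneg hk0 R⁻¹
  have hNσ : N * σk ≤ 1 := sval_inv_one_mul_sval_k_le_one hk0 hRunit
  -- facts about γ
  set Γ : Set ℝ := {r : ℝ | ∃ i j, i ≠ j ∧ r = |lam i - lam j|} with hΓ
  have hΓfin : Γ.Finite := by
    apply Set.Finite.subset (Set.finite_range fun p : Fin k × Fin k => |lam p.1 - lam p.2|)
    rintro r ⟨i, j, _, rfl⟩
    exact ⟨(i, j), rfl⟩
  have hΓne : Γ.Nonempty := by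
    refine ⟨|lam ⟨0, hk0⟩ - lam ⟨1, hk⟩|, ⟨0, hk0⟩, ⟨1, hk⟩, ?_, rfl⟩
    intro h
    simpa using congrArg Fin.val h
  have hγpos : 0 < γ := by
    obtain ⟨i, j, hij, hval⟩ : γ ∈ Γ := hγ ▸ Set.Nonempty.csInf_mem hΓne hΓfin
    rw [hval, abs_pos, sub_ne_zero]
    exact fun h => hij (hdist h)
  have hγle : ∀ i j, i ≠ j → γ ≤ |lam i - lam j| := by
    intro i j hij
    rw [hγ]
    exact csInf_le hΓfin.bddBelow ⟨i, j, hij, rfl⟩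
  have hεγ : ε3 * γ = σ1 / σk * σΔ := by
    rw [hε3]
    field_simp
  have hεγ0 : 0 ≤ ε3 * γ := by rw [hεγ]; positivity
  have hε30 : 0 ≤ ε3 := by
    have := div_nonneg hεγ0 hγpos.le
    rwa [mul_div_cancel_right₀ _ hγpos.ne'] at this
  have hσΔle : σΔ ≤ ε3 * γ := by
    rw [hεγ]
    rw [div_mul_eq_mul_div, le_div_iff₀ hσk]
    nlinarith
  have hεγhalf : ε3 * γ < γ / 2 := by nlinarith
  -- key chain inequality
  have hchain : ∀ y : Fin k → ℝ,
      vnorm ((R⁻¹).mulVec (Δ.mulVec (R.mulVec y))) ≤ (ε3 * γ) * vnorm y := by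
    intro y
    have c1 : vnorm ((R⁻¹).mulVec (Δ.mulVec (R.mulVec y)))
        ≤ N * vnorm (Δ.mulVec (R.mulVec y)) := vnorm_mulVec_le_sval_one hk0 _ _
    have c2 : vnorm (Δ.mulVec (R.mulVec y)) ≤ σΔ * vnorm (R.mulVec y) :=
      vnorm_mulVec_le_sval_one hk0 _ _
    have c3 : vnorm (R.mulVec y) ≤ σ1 * vnorm y := vnorm_mulVec_le_sval_one hk0 _ _
    have hkey : N * (σΔ * (σ1 * vnorm y)) ≤ ε3 * γ * vnorm y := by
      have h0 : 0 ≤ vnorm y := vnorm_nonneg y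
      have h1 : N * σk * (σΔ * σ1 * vnorm y) ≤ 1 * (σΔ * σ1 * vnorm y) :=
        mul_le_mul_of_nonneg_right hNσ (by positivity)
      rw [hεγ, div_mul_eq_mul_div, div_mul_eq_mul_div, le_div_iff₀ hσk]
      nlinarith
    calc vnorm ((R⁻¹).mulVec (Δ.mulVec (R.mulVec y)))
        ≤ N * vnorm (Δ.mulVec (R.mulVec y)) := c1
      _ ≤ N * (σΔ * vnorm (R.mulVec y)) := mul_le_mul_of_nonneg_left c2 hN0
      _ ≤ N * (σΔ * (σ1 * vnorm y)) := by
          apply mul_le_mul_of_nonneg_left _ hN0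
          exact mul_le_mul_of_nonneg_left c3 hσΔ0
      _ ≤ ε3 * γ * vnorm y := hkey
  -- root existence
  have hroot : ∀ i : Fin k, ∃ μ, |μ - lam i| ≤ ε3 * γ ∧
      (A + (1:ℝ) • Δ - μ • (1 : Matrix (Fin k) (Fin k) ℝ)).det = 0 := by
    intro i
    set a := lam i - γ / 2 with ha
    set b := lam i + γ / 2 with hb
    have hab : a ≤ b := by rw [ha, hb]; linarith
    have hta : ∀ j, ε3 * γ < |lam j - a| := by
      intro j
      rcases eq_or_ne j i with rfl | hji
      · rw [lt_abs]; left; rw [ha]; linarith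
      · rcases le_abs.1 (hγle j i hji) with h | h
        · rw [lt_abs]; left; rw [ha]; linarith
        · rw [lt_abs]; right; rw [ha]; linarith
    have htb : ∀ j, ε3 * γ < |lam j - b| := by
      intro j
      rcases eq_or_ne j i with rfl | hji
      · rw [lt_abs]; right; rw [hb]; linarith
      · rcases le_abs.1 (hγle j i hji) with h | h
        · rw [lt_abs]; left; rw [hb]; linarith
        · rw [lt_abs]; right; rw [hb]; linarith
    set q : ℝ → ℝ → ℝ :=
      fun s t => (A + s • Δ - t • (1 : Matrix (Fin k) (Fin k) ℝ)).det with hq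
    have hq0 : ∀ t, q 0 t = ∏ j, (lam j - t) := by
      intro t
      rw [hq]
      simp only [zero_smul, add_zero]
      exact det_A_sub hdetR hA t
    have hna : ∀ s ∈ Set.Icc (0:ℝ) 1, q s a ≠ 0 :=
      fun s hs => bf hdetR hA hεγ0 hchain hs.1 hs.2 hta
    have hnb : ∀ s ∈ Set.Icc (0:ℝ) 1, q s b ≠ 0 :=
      fun s hs => bf hdetR hA hεγ0 hchain hs.1 hs.2 htb
    have hsa : 0 < q 0 a * q 1 a := sign_const (cont_s A Δ a) hna
    have hsb : 0 < q 0 b * q 1 b := sign_const (cont_s A Δ b) hnb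
    have hprod : q 0 a * q 0 b < 0 := by
      rw [hq0 a, hq0 b, ← Finset.prod_mul_distrib,
        ← Finset.mul_prod_erase _ _ (Finset.mem_univ i)]
      apply mul_neg_of_neg_of_pos
      · rw [ha, hb]; nlinarith
      · apply Finset.prod_pos
        intro j hj
        have hji : j ≠ i := Finset.ne_of_mem_erase hj
        rcases le_abs.1 (hγle j i hji) with h | h
        · rw [ha, hb]; nlinarith
        · rw [ha, hb]; nlinarith
    have h1ab : q 1 a * q 1 b < 0 := by nlinarith
    have hq1cont : Continuous fun t => q 1 t := by
      have : (fun t => q 1 t) = fun t => ((A + (1:ℝ) • Δ) - t • (1 : Matrix (Fin k) (Fin k) ℝ)).det := rfl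
      rw [this]
      exact cont_t _
    have hroot' : ∃ μ ∈ Set.Icc a b, q 1 μ = 0 := by
      rcases lt_or_ge (q 1 a) 0 with hlt | hge
      · have hgt : 0 < q 1 b := by nlinarith
        obtain ⟨μ, hμ, hμ0⟩ := intermediate_value_Icc hab hq1cont.continuousOn
          (Set.mem_Icc.2 ⟨hlt.le, hgt.le⟩)
        exact ⟨μ, hμ, hμ0⟩
      · have hgt : q 1 b < 0 := by nlinarith
        obtain ⟨μ, hμ, hμ0⟩ := intermediate_value_Icc' hab hq1cont.continuousOn
          (Set.mem_Icc.2 ⟨hgt.le, hge⟩)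
        exact ⟨μ, hμ, hμ0⟩
    obtain ⟨μ, hμIcc, hμ0⟩ := hroot'
    refine ⟨μ, ?_, hμ0⟩
    by_contra hcon
    push_neg at hcon
    have htμ : ∀ j, ε3 * γ < |lam j - μ| := by
      intro j
      rcases eq_or_ne j i with rfl | hji
      · rw [abs_sub_comm] at hcon; exact hcon
      · have h1 := hγle j i hji
        have h2 : a ≤ μ := hμIcc.1
        have h3 : μ ≤ b := hμIcc.2
        rcases le_abs.1 h1 with h | h
        · rw [lt_abs]; left; rw [ha] at h2; rw [hb] at h3; linarith
        · rw [lt_abs]; right; rw [ha] at h2; rw [hb] at h3; linarith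
    exact bf hdetR hA hεγ0 hchain zero_le_one (le_refl 1) htμ hμ0
  -- choose eigenvalues
  choose μ hμ1 hμ2 using hroot
  have hdetAh : ∀ i, (Ah - μ i • (1 : Matrix (Fin k) (Fin k) ℝ)).det = 0 := by
    intro i
    have h := hμ2 i
    have e : A + (1:ℝ) • Δ - μ i • (1 : Matrix (Fin k) (Fin k) ℝ)
        = Ah - μ i • (1 : Matrix (Fin k) (Fin k) ℝ) := by
      rw [one_smul, hΔdef]; abel
    rwa [e] at h
  -- eigenvectors
  have hvec : ∀ i, ∃ v : Fin k → ℝ, vnorm v = 1 ∧ Ah.mulVec v = μ i • v := by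
    intro i
    obtain ⟨v, hv0, hvk⟩ := Matrix.exists_mulVec_eq_zero_iff.2 (hdetAh i)
    have heig : Ah.mulVec v = μ i • v := by
      rw [Matrix.sub_mulVec, Matrix.smul_mulVec, Matrix.one_mulVec, sub_eq_zero] at hvk
      exact hvk
    have hvp : 0 < vnorm v := vnorm_pos hv0
    refine ⟨(vnorm v)⁻¹ • v, ?_, ?_⟩
    · rw [vnorm_smul, abs_of_pos (by positivity : (0:ℝ) < (vnorm v)⁻¹),
        inv_mul_cancel₀ hvp.ne']
    · rw [Matrix.mulVec_smul, heig, smul_comm]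
  choose xi hxi1 hxi2 using hvec
  -- eigenvalues are distinct
  have hμinj : Function.Injective μ := by
    intro i j hij
    by_contra hne
    have h1 := hγle i j hne
    have h2 := hμ1 i
    have h3 := hμ1 j
    rw [hij] at h2
    have h4 : |lam i - lam j| ≤ |μ j - lam j| + |μ j - lam i| := by
      calc |lam i - lam j| = |(μ j - lam j) - (μ j - lam i)| := by congr 1; ring
        _ ≤ |μ j - lam j| + |μ j - lam i| := abs_sub _ _
    linarith
  refine ⟨xi, μ, Equiv.refl _,
    fun i => if 0 ≤ ((R⁻¹).mulVec (xi i)) i then 1 else -1,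
    hμinj, hxi1, hxi2, fun i => by simpa using hμ1 i,
    fun i => by dsimp only; split <;> simp, ?_⟩
  intro i
  simp only [Equiv.refl_apply]
  set ξ : Fin k → ℝ := xi i with hξdef
  set c : Fin k → ℝ := (R⁻¹).mulVec ξ with hcdef
  set s : ℝ := if 0 ≤ c i then 1 else -1 with hsdef
  have hξ1 : vnorm ξ = 1 := hxi1 i
  have hξR : ξ = R.mulVec c := by
    rw [hcdef, Matrix.mulVec_mulVec, Matrix.mul_nonsing_inv R hdetR, Matrix.one_mulVec]
  -- coordinate equation
  have hrcoord : ∀ j, ((R⁻¹).mulVec (Δ.mulVec ξ)) j = (μ i - lam j) * c j := by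
    have e1 : Δ.mulVec ξ = μ i • ξ - A.mulVec ξ := by
      rw [hΔdef, Matrix.sub_mulVec, hxi2 i]
    have e2 : (R⁻¹) * A = Matrix.diagonal lam * R⁻¹ := by
      rw [hA, ← Matrix.mul_assoc, ← Matrix.mul_assoc, Matrix.nonsing_inv_mul R hdetR,
        Matrix.one_mul]
    have e3 : (R⁻¹).mulVec (A.mulVec ξ) = (Matrix.diagonal lam).mulVec c := by
      rw [Matrix.mulVec_mulVec, e2, ← Matrix.mulVec_mulVec]
    intro j
    rw [e1, Matrix.mulVec_sub, Matrix.mulVec_smul, e3]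
    simp only [Pi.sub_apply, Pi.smul_apply, smul_eq_mul, Matrix.mulVec_diagonal]
    ring
  -- norm bound
  have hrb : vnorm ((R⁻¹).mulVec (Δ.mulVec ξ)) ≤ N * (ε3 * γ) := by
    calc vnorm ((R⁻¹).mulVec (Δ.mulVec ξ)) ≤ N * vnorm (Δ.mulVec ξ) :=
          vnorm_mulVec_le_sval_one hk0 _ _
      _ ≤ N * (σΔ * vnorm ξ) :=
          mul_le_mul_of_nonneg_left (vnorm_mulVec_le_sval_one hk0 _ _) hN0
      _ = N * σΔ := by rw [hξ1, mul_one]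
      _ ≤ N * (ε3 * γ) := mul_le_mul_of_nonneg_left hσΔle hN0
  have hcj : ∀ j, j ≠ i → |c j| ≤ 2 * N * ε3 := by
    intro j hji
    have h2 := hγle j i hji
    have h3 := hμ1 i
    have h4 : |lam j - lam i| ≤ |μ i - lam i| + |μ i - lam j| := by
      calc |lam j - lam i| = |(μ i - lam i) - (μ i - lam j)| := by congr 1; ring
        _ ≤ |μ i - lam i| + |μ i - lam j| := abs_sub _ _
    have h1 : γ / 2 ≤ |μ i - lam j| := by linarith
    have h6 : |((R⁻¹).mulVec (Δ.mulVec ξ)) j| ≤ N * (ε3 * γ) :=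
      (abs_entry_le_vnorm _ j).trans hrb
    rw [hrcoord j, abs_mul] at h6
    have h7 : γ / 2 * |c j| ≤ N * (ε3 * γ) :=
      le_trans (mul_le_mul_of_nonneg_right h1 (abs_nonneg _)) h6
    nlinarith [abs_nonneg (c j)]
  -- decompose ξ
  set β : ℝ := ((k : ℝ) - 1) * (2 * N * ε3) with hβdef
  set w : Fin k → ℝ := ∑ j ∈ Finset.univ.erase i, c j • (fun a => R a j) with hwdef
  have hwa : ∀ a, w a = ∑ j ∈ Finset.univ.erase i, c j * R a j := by
    intro a
    rw [hwdef, Finset.sum_apply]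
    exact Finset.sum_congr rfl fun j _ => rfl
  have hξw : ∀ a, ξ a = w a + c i * R a i := by
    intro a
    have e : ξ a = ∑ j, R a j * c j := by
      rw [hξR]; simp [Matrix.mulVec, dotProduct]
    rw [e, ← Finset.add_sum_erase _ _ (Finset.mem_univ i), hwa a]
    rw [add_comm, mul_comm]
    congr 1
    exact Finset.sum_congr rfl fun j _ => mul_comm _ _
  have hwnorm : vnorm w ≤ β := by
    have t1 : vnorm w ≤ ∑ j ∈ Finset.univ.erase i, vnorm (c j • (fun a => R a j)) := by
      rw [hwdef]; exact vnorm_sum_le _ _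
    have t2 : ∀ j ∈ Finset.univ.erase i, vnorm (c j • (fun a => R a j)) ≤ 2 * N * ε3 := by
      intro j hj
      rw [vnorm_smul, hRcol j, mul_one]
      exact hcj j (Finset.ne_of_mem_erase hj)
    have t3 := Finset.sum_le_card_nsmul _ _ _ t2
    have t4 : (Finset.univ.erase i).card = k - 1 := by
      rw [Finset.card_erase_of_mem (Finset.mem_univ i), Finset.card_univ, Fintype.card_fin]
    rw [t4, nsmul_eq_mul, Nat.cast_sub hk0, Nat.cast_one] at t3
    exact le_trans t1 (le_trans t3 (le_of_eq (by rw [hβdef])))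
  have hcol : vnorm (fun a => R a i) = 1 := hRcol i
  have hci1 : |c i| - 1 ≤ β := by
    have e : (fun a => c i * R a i) = c i • (fun a => R a i) := rfl
    have t1 : vnorm (fun a => c i * R a i) ≤ vnorm ξ + vnorm w := by
      have e2 : (fun a => c i * R a i) = ξ - w := by
        funext a; rw [Pi.sub_apply, hξw a]; ring
      rw [e2]; exact vnorm_sub_le _ _
    rw [e, vnorm_smul, hcol, mul_one, hξ1] at t1
    linarith
  have hci2 : 1 - |c i| ≤ β := by
    have t1 : vnorm ξ ≤ vnorm w + |c i| := by
      have e2 : ξ = w + c i • (fun a => R a i) := by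
        funext a; rw [Pi.add_apply, hξw a]; rfl
      rw [e2]
      exact (vnorm_add_le _ _).trans (by rw [vnorm_smul, hcol, mul_one])
    rw [hξ1] at t1
    linarith
  have hs1 : |s| = 1 := by rw [hsdef]; split <;> simp
  have hss : s * s = 1 := by rw [hsdef]; split <;> norm_num
  have hcs : |c i - s| ≤ β := by
    rw [hsdef]
    split
    · next h => rw [abs_of_nonneg h] at hci1 hci2; rw [abs_le]; constructor <;> linarith
    · next h =>
        push_neg at h
        rw [abs_of_neg h] at hci1 hci2
        rw [abs_le]; constructor <;> linarith
  have hrepr : (fun a => s * ξ a - R a i) = s • (w + (c i - s) • (fun a => R a i)) := by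
    funext a
    have hw' : w a = ξ a - c i * R a i := by linarith [hξw a]
    simp only [Pi.smul_apply, Pi.add_apply, smul_eq_mul]
    linear_combination (-s) * hw' + (R a i) * hss
  calc vnorm (fun a => s * ξ a - R a i)
      = vnorm (w + (c i - s) • (fun a => R a i)) := by rw [hrepr, vnorm_smul, hs1, one_mul]
    _ ≤ vnorm w + |c i - s| * 1 := by
        refine (vnorm_add_le _ _).trans ?_
        rw [vnorm_smul, hcol]
    _ ≤ β + β := by rw [mul_one]; exact add_le_add hwnorm hcs
    _ ≤ 4 * ((k : ℝ) - 1) * N * ε3 := le_of_eq (by rw [hβdef]; ring)
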